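/- If c ∈ ℝ satisfies Σ_{i ∈ S} a_i·c^i = 0, then for every formal power series η ∈ ℝ[[t]] with order(η) > p, the power series Σ_{i=0}^d c_i·(c·t^p + η)^i has t-adic order strictly greater than b_0. -/

import Mathlib

open PowerSeries

private lemma aux_order_pow_le {g : PowerSeries ℝ} {p : ℕ} (hg : (p : ℕ∞) ≤ g.order) (i : ℕ) :
    ((i * p : ℕ) : ℕ∞) ≤ (g ^ i).order := by
  induction i with
  | zero => simp
  | succ i ih =>
    calc (((i + 1) * p : ℕ) : ℕ∞) = ((i * p : ℕ) : ℕ∞) + (p : ℕ∞) := by push_cast; ring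
    _ ≤ (g ^ i).order + g.order := add_le_add ih hg
    _ ≤ (g ^ i * g).order := PowerSeries.le_order_mul _ _
    _ = (g ^ (i + 1)).order := by rw [pow_succ]

private lemma aux_coeff_pow {g : PowerSeries ℝ} {p : ℕ} {a : ℝ}
    (hg : (p : ℕ∞) ≤ g.order) (hga : PowerSeries.coeff p g = a) (i : ℕ) :
    PowerSeries.coeff (i * p) (g ^ i) = a ^ i := by
  induction i with
  | zero => simp
  | succ i ih =>
    rw [pow_succ', PowerSeries.coeff_mul,
      Finset.sum_eq_single ((p, i * p) : ℕ × ℕ)]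
    · rw [hga, ih, pow_succ]; ring
    · rintro ⟨j, m⟩ hmem hne
      rw [Finset.HasAntidiagonal.mem_antidiagonal] at hmem
      rcases lt_trichotomy j p with h | h | h
      · rw [PowerSeries.coeff_of_lt_order j
          (lt_of_lt_of_le (by exact_mod_cast h) hg), zero_mul]
      · exfalso; apply hne
        have hq : j + m = i * p + p := by rw [hmem]; ring
        have hm : m = i * p := by
          rw [h, add_comm] at hq; exact Nat.add_right_cancel hq
        rw [h, hm]
      · have hm : m < i * p := by
          have : j + m = (i + 1) * p := hmem
          nlinarith
        rw [PowerSeries.coeff_of_lt_order m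
          (lt_of_lt_of_le (by exact_mod_cast hm) (aux_order_pow_le hg i)), mul_zero]
    · intro h
      exact absurd (Finset.HasAntidiagonal.mem_antidiagonal.mpr (by ring : p + i * p = (i + 1) * p)) h

/-- Lemma 2.2(ii): if `c` is a root of the polynomial associated to the highest Newton
edge, then sliding strictly increases the order: the order of `Σ cᵢ·(c·t^p + η)^i` is
strictly greater than `order c₀`. -/
theorem order_increases_root_perturbation
    (d : ℕ) (c : Fin (d + 1) → PowerSeries ℝ) (hc : ∃ i, c i ≠ 0)
    (p : ℕ) (hp : 0 < p)
    (hb0 : (c 0).order ≠ ⊤)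
    (hmin : ∀ i : Fin (d + 1), (c 0).order ≤ ((i : ℕ) * p : ℕ∞) + (c i).order)
    (a : ℝ)
    (ha : (∑ i ∈ Finset.univ.filter
        (fun i : Fin (d + 1) => ((i : ℕ) * p : ℕ∞) + (c i).order = (c 0).order),
        (PowerSeries.coeff ((c i).order.toNat) (c i)) * a ^ (i : ℕ)) = 0) :
    ∀ η : PowerSeries ℝ, (p : ℕ∞) < η.order →
      (c 0).order < (∑ i : Fin (d + 1),
        c i * (PowerSeries.C a * PowerSeries.X ^ p + η) ^ (i : ℕ)).order := by
  intro η hη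
  set g : PowerSeries ℝ := PowerSeries.C a * PowerSeries.X ^ p + η with hgdef
  obtain ⟨n, hn⟩ : ∃ n : ℕ, (c 0).order = (n : ℕ∞) := ⟨_, (ENat.coe_toNat hb0).symm⟩
  -- coefficients of g
  have hgcoeff : ∀ m : ℕ, m < p → PowerSeries.coeff m g = 0 := by
    intro m hm
    have h1 : PowerSeries.coeff m η = 0 :=
      PowerSeries.coeff_of_lt_order m (lt_of_lt_of_le (by exact_mod_cast hm) hη.le)
    simp [hgdef, PowerSeries.coeff_X_pow, Nat.ne_of_lt hm, h1]
  have hgp : PowerSeries.coeff p g = a := by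
    have h1 : PowerSeries.coeff p η = 0 :=
      PowerSeries.coeff_of_lt_order p hη
    simp [hgdef, PowerSeries.coeff_X_pow, h1]
  have hgord : (p : ℕ∞) ≤ g.order := PowerSeries.nat_le_order g p hgcoeff
  -- coefficient of i*p in g^i
  have hpowcoeff := aux_coeff_pow hgord hgp
  have hpowlb : ∀ (i : ℕ) (m : ℕ), m < i * p → PowerSeries.coeff m (g ^ i) = 0 := by
    intro i m hm
    exact PowerSeries.coeff_of_lt_order m
      (lt_of_lt_of_le (by exact_mod_cast hm) (aux_order_pow_le hgord i))
  -- main claim: all coefficients up to n vanish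
  have key : ∀ k, k ≤ n → PowerSeries.coeff k (∑ i : Fin (d + 1), c i * g ^ (i : ℕ)) = 0 := by
    intro k hk
    rw [map_sum]
    rcases lt_or_eq_of_le hk with hk | hk
    · -- k < n: every summand vanishes
      apply Finset.sum_eq_zero
      intro i _
      rw [PowerSeries.coeff_mul]
      apply Finset.sum_eq_zero
      rintro ⟨j, m⟩ hmem
      rw [Finset.HasAntidiagonal.mem_antidiagonal] at hmem
      by_contra hne
      have hj : (c i).order ≤ (j : ℕ∞) :=
        PowerSeries.order_le j fun h => hne (by rw [h, zero_mul])
      have hm : ((i : ℕ) * p : ℕ∞) ≤ (m : ℕ∞) := by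
        have : (g ^ (i : ℕ)).order ≤ (m : ℕ∞) :=
          PowerSeries.order_le m fun h => hne (by rw [h, mul_zero])
        calc ((i : ℕ) * p : ℕ∞) = (((i : ℕ) * p : ℕ) : ℕ∞) := by push_cast; ring
        _ ≤ (g ^ (i : ℕ)).order := aux_order_pow_le hgord (i : ℕ)
        _ ≤ (m : ℕ∞) := this
      have : (n : ℕ∞) ≤ (k : ℕ∞) := by
        calc (n : ℕ∞) = (c 0).order := hn.symm
        _ ≤ ((i : ℕ) * p : ℕ∞) + (c i).order := hmin i
        _ ≤ (m : ℕ∞) + (j : ℕ∞) := add_le_add hm hj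
        _ = (k : ℕ∞) := by rw [← Nat.cast_add]; rw [Nat.add_comm] at hmem; rw [hmem]
      exact absurd (Nat.cast_le.mp this) (Nat.not_le.mpr hk)
    · -- k = n
      subst hk
      rw [Finset.sum_filter] at ha
      rw [← ha]
      apply Finset.sum_congr rfl
      intro i _
      by_cases hiS : ((i : ℕ) * p : ℕ∞) + (c i).order = (c 0).order
      · -- i in S
        rw [if_pos hiS]
        -- (c i).order is finite
        have hord_ne : (c i).order ≠ ⊤ := by
          intro h
          rw [h, add_top] at hiS
          exact hb0 hiS.symm
        obtain ⟨b, hb⟩ : ∃ b : ℕ, (c i).order = (b : ℕ∞) := ⟨_, (ENat.coe_toNat hord_ne).symm⟩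
        have htoNat : (c i).order.toNat = b := by rw [hb]; simp
        have hsum : (i : ℕ) * p + b = k := by
          rw [hb, hn] at hiS
          exact_mod_cast hiS
        rw [PowerSeries.coeff_mul,
          Finset.sum_eq_single ((b, (i : ℕ) * p) : ℕ × ℕ)]
        · rw [hpowcoeff (i : ℕ), htoNat]
        · rintro ⟨j, m⟩ hmem hne
          rw [Finset.HasAntidiagonal.mem_antidiagonal] at hmem
          rcases lt_trichotomy m ((i : ℕ) * p) with h | h | h
          · rw [hpowlb _ _ h, mul_zero]
          · exfalso; apply hne; subst h
            have : j = b := by omega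
            simp [this]
          · have hj : j < b := by omega
            rw [PowerSeries.coeff_of_lt_order j (by rw [hb]; exact_mod_cast hj), zero_mul]
        · intro h
          exact absurd (Finset.HasAntidiagonal.mem_antidiagonal.mpr (by omega : b + (i : ℕ) * p = k)) h
      · -- i not in S: strict inequality kills coefficient of k = n
        rw [if_neg hiS]
        have hstrict : (k : ℕ∞) < ((i : ℕ) * p : ℕ∞) + (c i).order :=
          lt_of_le_of_ne (hn ▸ hmin i) (hn ▸ Ne.symm hiS)
        rw [PowerSeries.coeff_mul]
        apply Finset.sum_eq_zero
        rintro ⟨j, m⟩ hmem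
        rw [Finset.HasAntidiagonal.mem_antidiagonal] at hmem
        by_contra hne
        have hj : (c i).order ≤ (j : ℕ∞) :=
          PowerSeries.order_le j fun h => hne (by rw [h, zero_mul])
        have hm : ((i : ℕ) * p : ℕ∞) ≤ (m : ℕ∞) := by
          have : (g ^ (i : ℕ)).order ≤ (m : ℕ∞) :=
            PowerSeries.order_le m fun h => hne (by rw [h, mul_zero])
          calc ((i : ℕ) * p : ℕ∞) = (((i : ℕ) * p : ℕ) : ℕ∞) := by push_cast; ring
          _ ≤ (g ^ (i : ℕ)).order := aux_order_pow_le hgord (i : ℕ)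
          _ ≤ (m : ℕ∞) := this
        have : (k : ℕ∞) < (k : ℕ∞) := by
          calc (k : ℕ∞) < ((i : ℕ) * p : ℕ∞) + (c i).order := hstrict
          _ ≤ (m : ℕ∞) + (j : ℕ∞) := add_le_add hm hj
          _ = (k : ℕ∞) := by rw [← Nat.cast_add]; rw [Nat.add_comm] at hmem; rw [hmem]
        exact lt_irrefl _ this
  rw [hn]
  have : ((n + 1 : ℕ) : ℕ∞) ≤ (∑ i : Fin (d + 1), c i * g ^ (i : ℕ)).order :=
    PowerSeries.nat_le_order _ (n + 1) (fun k hk => key k (Nat.lt_succ_iff.mp hk))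
  exact lt_of_lt_of_le (by exact_mod_cast Nat.lt_succ_self n) this
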